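/- arXiv:1508.04568 — 2 statements merged into one kernel-verified Lean document; each statement's English description precedes it below -/
import Mathlib

section
/- Let (V,ω) be a symplectic vector space and L ⊆ V × V a linear canonical relation from V to itself with domain A = {v : ∃ w, (v,w) ∈ L} and range B = {w : ∃ v, (v,w) ∈ L}. Then dim(A^ω) = dim(B^ω) and dim A = dim B. -/
open Submodule Module

/-- The ω-orthogonal of a subspace: `W^ω = {v | ω(v,u) = 0 for all u ∈ W}`. -/
def oOrtho {V : Type*} [AddCommGroup V] [Module ℝ V]
    (ω : V →ₗ[ℝ] V →ₗ[ℝ] ℝ) (W : Submodule ℝ V) : Submodule ℝ V where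
  carrier := {v | ∀ u ∈ W, ω v u = 0}
  add_mem' := by
    intro a b ha hb u hu
    rw [Set.mem_setOf_eq] at *
    rw [map_add, LinearMap.add_apply, ha u hu, hb u hu, add_zero]
  zero_mem' := by intro u _; simp
  smul_mem' := by
    intro c a ha u hu
    rw [Set.mem_setOf_eq] at *
    rw [map_smul, LinearMap.smul_apply, ha u hu, smul_zero]

/-- The symplectic form `ω̄((v,v'),(u,u')) = ω(v,u) − ω(v',u')` on `V × V`. -/
def prodForm {X Y : Type*} [AddCommGroup X] [Module ℝ X] [AddCommGroup Y] [Module ℝ Y]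
    (ωX : X →ₗ[ℝ] X →ₗ[ℝ] ℝ) (ωY : Y →ₗ[ℝ] Y →ₗ[ℝ] ℝ) :
    (X × Y) →ₗ[ℝ] (X × Y) →ₗ[ℝ] ℝ :=
  LinearMap.mk₂ ℝ (fun p q => ωX p.1 q.1 - ωY p.2 q.2)
    (by intro m₁ m₂ n; simp [map_add, LinearMap.add_apply]; ring)
    (by intro c m n; simp [map_smul, LinearMap.smul_apply, smul_eq_mul]; ring)
    (by intro m n₁ n₂; simp [map_add, LinearMap.add_apply]; ring)
    (by intro c m n; simp [map_smul, LinearMap.smul_apply, smul_eq_mul]; ring)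


lemma oOrtho_eq_orthogonal {V : Type*} [AddCommGroup V] [Module ℝ V]
    (ω : V →ₗ[ℝ] V →ₗ[ℝ] ℝ) (hrefl : LinearMap.IsRefl ω) (W : Submodule ℝ V) :
    oOrtho ω W = LinearMap.BilinForm.orthogonal ω W := by
  ext v
  simp only [LinearMap.BilinForm.mem_orthogonal_iff, LinearMap.BilinForm.isOrtho_def]
  constructor
  · intro h u hu; exact hrefl _ _ (h u hu)
  · intro h u hu; exact hrefl _ _ (h u hu)

lemma finrank_oOrtho {V : Type*} [AddCommGroup V] [Module ℝ V] [FiniteDimensional ℝ V]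
    (ω : V →ₗ[ℝ] V →ₗ[ℝ] ℝ) (hωalt : ω.IsAlt) (hωnd : ω.Nondegenerate)
    (W : Submodule ℝ V) :
    Module.finrank ℝ W + Module.finrank ℝ (oOrtho ω W) = Module.finrank ℝ V := by
  rw [oOrtho_eq_orthogonal ω hωalt.isRefl W,
    LinearMap.BilinForm.finrank_orthogonal (B := ω) hωnd W]
  have := Submodule.finrank_le W
  omega

set_option maxHeartbeats 1000000 in
lemma rank_aux_fst {V : Type*} [AddCommGroup V] [Module ℝ V] [FiniteDimensional ℝ V]
    (ω : V →ₗ[ℝ] V →ₗ[ℝ] ℝ)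
    (L : Submodule ℝ (V × V)) (hL : L = oOrtho (prodForm ω ω) L) :
    Module.finrank ℝ (Submodule.map (LinearMap.fst ℝ V V) L) +
      Module.finrank ℝ (oOrtho ω (Submodule.map (LinearMap.snd ℝ V V) L)) =
      Module.finrank ℝ L := by
  classical
  set f := (LinearMap.fst ℝ V V).domRestrict L with hf
  have hrn := LinearMap.finrank_range_add_finrank_ker f
  have hrange : LinearMap.range f = Submodule.map (LinearMap.fst ℝ V V) L := by
    simp [hf]
  -- the kernel is isomorphic to oOrtho ω (map snd L)
  have hker : Module.finrank ℝ (LinearMap.ker f) =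
      Module.finrank ℝ (oOrtho ω (Submodule.map (LinearMap.snd ℝ V V) L)) := by
    have hmem : ∀ w : V, ((0 : V), w) ∈ L ↔
        w ∈ oOrtho ω (Submodule.map (LinearMap.snd ℝ V V) L) := by
      intro w
      constructor
      · intro h u hu
        obtain ⟨p, hp, rfl⟩ := hu
        rw [hL] at h
        have := h p hp
        simpa [prodForm] using this
      · intro h
        rw [hL]
        intro p hp
        have : ω w p.2 = 0 := h p.2 ⟨p, hp, rfl⟩
        simp [prodForm, this]
    set K := Submodule.comap (LinearMap.inr ℝ V V) L with hK
    have hKeq : K = oOrtho ω (Submodule.map (LinearMap.snd ℝ V V) L) := by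
      ext w; exact hmem w
    have hinf : L ⊓ LinearMap.ker (LinearMap.fst ℝ V V) =
        Submodule.map (LinearMap.inr ℝ V V) K := by
      ext p
      simp only [Submodule.mem_inf, LinearMap.mem_ker, LinearMap.fst_apply,
        Submodule.mem_map, Submodule.mem_comap, LinearMap.inr_apply, hK]
      constructor
      · rintro ⟨hpL, hp1⟩
        exact ⟨p.2, by rwa [show ((0 : V), p.2) = p by ext <;> simp [hp1]],
          by ext <;> simp [hp1]⟩
      · rintro ⟨w, hw, rfl⟩
        exact ⟨hw, rfl⟩
    have e1 : LinearMap.ker f =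
        Submodule.comap L.subtype (L ⊓ LinearMap.ker (LinearMap.fst ℝ V V)) := by
      rw [hf, LinearMap.ker_domRestrict, Submodule.comap_inf, Submodule.comap_subtype_self,
        top_inf_eq]
    rw [e1, LinearEquiv.finrank_eq (Submodule.comapSubtypeEquivOfLe inf_le_left), hinf,
      ← LinearEquiv.finrank_eq (Submodule.equivMapOfInjective _ LinearMap.inr_injective K),
      hKeq]
  rw [hrange, hker] at hrn
  exact hrn

set_option maxHeartbeats 1000000 in
lemma rank_aux_snd {V : Type*} [AddCommGroup V] [Module ℝ V] [FiniteDimensional ℝ V]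
    (ω : V →ₗ[ℝ] V →ₗ[ℝ] ℝ)
    (L : Submodule ℝ (V × V)) (hL : L = oOrtho (prodForm ω ω) L) :
    Module.finrank ℝ (Submodule.map (LinearMap.snd ℝ V V) L) +
      Module.finrank ℝ (oOrtho ω (Submodule.map (LinearMap.fst ℝ V V) L)) =
      Module.finrank ℝ L := by
  classical
  set f := (LinearMap.snd ℝ V V).domRestrict L with hf
  have hrn := LinearMap.finrank_range_add_finrank_ker f
  have hrange : LinearMap.range f = Submodule.map (LinearMap.snd ℝ V V) L := by
    simp [hf]
  have hker : Module.finrank ℝ (LinearMap.ker f) =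
      Module.finrank ℝ (oOrtho ω (Submodule.map (LinearMap.fst ℝ V V) L)) := by
    have hmem : ∀ w : V, (w, (0 : V)) ∈ L ↔
        w ∈ oOrtho ω (Submodule.map (LinearMap.fst ℝ V V) L) := by
      intro w
      constructor
      · intro h u hu
        obtain ⟨p, hp, rfl⟩ := hu
        rw [hL] at h
        have := h p hp
        simpa [prodForm] using this
      · intro h
        rw [hL]
        intro p hp
        have : ω w p.1 = 0 := h p.1 ⟨p, hp, rfl⟩
        simp [prodForm, this]
    set K := Submodule.comap (LinearMap.inl ℝ V V) L with hK
    have hKeq : K = oOrtho ω (Submodule.map (LinearMap.fst ℝ V V) L) := by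
      ext w; exact hmem w
    have hinf : L ⊓ LinearMap.ker (LinearMap.snd ℝ V V) =
        Submodule.map (LinearMap.inl ℝ V V) K := by
      ext p
      simp only [Submodule.mem_inf, LinearMap.mem_ker, LinearMap.snd_apply,
        Submodule.mem_map, Submodule.mem_comap, LinearMap.inl_apply, hK]
      constructor
      · rintro ⟨hpL, hp1⟩
        exact ⟨p.1, by rwa [show (p.1, (0 : V)) = p by ext <;> simp [hp1]],
          by ext <;> simp [hp1]⟩
      · rintro ⟨w, hw, rfl⟩
        exact ⟨hw, rfl⟩
    have e1 : LinearMap.ker f =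
        Submodule.comap L.subtype (L ⊓ LinearMap.ker (LinearMap.snd ℝ V V)) := by
      rw [hf, LinearMap.ker_domRestrict, Submodule.comap_inf, Submodule.comap_subtype_self,
        top_inf_eq]
    rw [e1, LinearEquiv.finrank_eq (Submodule.comapSubtypeEquivOfLe inf_le_left), hinf,
      ← LinearEquiv.finrank_eq (Submodule.equivMapOfInjective _ LinearMap.inl_injective K),
      hKeq]
  rw [hrange, hker] at hrn
  exact hrn

/-- for a linear canonical relation `L ⊆ V × V` with domain `A` and range
`B`, one has `dim A^ω = dim B^ω` and `dim A = dim B`. -/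
theorem stmt14
    {V : Type*} [AddCommGroup V] [Module ℝ V] [FiniteDimensional ℝ V]
    (ω : V →ₗ[ℝ] V →ₗ[ℝ] ℝ) (hωalt : ω.IsAlt) (hωnd : ω.Nondegenerate)
    (L : Submodule ℝ (V × V)) (hL : L = oOrtho (prodForm ω ω) L) :
    Module.finrank ℝ (oOrtho ω (Submodule.map (LinearMap.fst ℝ V V) L)) =
      Module.finrank ℝ (oOrtho ω (Submodule.map (LinearMap.snd ℝ V V) L)) ∧
    Module.finrank ℝ (Submodule.map (LinearMap.fst ℝ V V) L) =
      Module.finrank ℝ (Submodule.map (LinearMap.snd ℝ V V) L) := by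
  have h1 := rank_aux_fst ω L hL
  have h2 := rank_aux_snd ω L hL
  have hA := finrank_oOrtho ω hωalt hωnd (Submodule.map (LinearMap.fst ℝ V V) L)
  have hB := finrank_oOrtho ω hωalt hωnd (Submodule.map (LinearMap.snd ℝ V V) L)
  omega
end

section
/- Let (V,ω) and (V̂,ω̂) be symplectic vector spaces, let L ⊆ V × V and L̂ ⊆ V̂ × V̂ be linear canonical relations with domains A, Â and ranges B, B̂ respectively, and let A₁, B₁ be subspaces with A = A^ω ⊕ A₁ and B = B^ω ⊕ B₁. Let φ_L : A₁ → B₁ be the induced linear symplectomorphism, characterized by: for (v₁,w₁) ∈ A₁ × B₁, (v₁,w₁) ∈ L if and only if w₁ = φ_L(v₁). Then a linear symplectomorphism S : V → V̂ is an equivalence between L and L̂ (i.e. (v,w) ∈ L ⟺ (Sv,Sw) ∈ L̂ for all v,w ∈ V) if and only if (i) S(A^ω) = Â^ω̂ and S(B^ω) = B̂^ω̂, and (ii) for every v₁ ∈ A₁, (S v₁, S(φ_L(v₁))) ∈ L̂. -/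
open Submodule Module

lemma mem_oOrtho_iff {V : Type*} [AddCommGroup V] [Module ℝ V]
    (ω : V →ₗ[ℝ] V →ₗ[ℝ] ℝ) (P : Submodule ℝ V) (v : V) :
    v ∈ oOrtho ω P ↔ ∀ u ∈ P, ω v u = 0 := Iff.rfl

lemma prodForm_apply {X Y : Type*} [AddCommGroup X] [Module ℝ X] [AddCommGroup Y] [Module ℝ Y]
    (ωX : X →ₗ[ℝ] X →ₗ[ℝ] ℝ) (ωY : Y →ₗ[ℝ] Y →ₗ[ℝ] ℝ) (p q : X × Y) :
    prodForm ωX ωY p q = ωX p.1 q.1 - ωY p.2 q.2 := rfl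

lemma lag_left {V : Type*} [AddCommGroup V] [Module ℝ V]
    (ω : V →ₗ[ℝ] V →ₗ[ℝ] ℝ) (L : Submodule ℝ (V × V))
    (hL : L = oOrtho (prodForm ω ω) L) (v : V)
    (hv : v ∈ oOrtho ω (Submodule.map (LinearMap.fst ℝ V V) L)) :
    ((v, (0 : V)) : V × V) ∈ L := by
  rw [hL, mem_oOrtho_iff]
  rintro ⟨u, u'⟩ hu
  rw [prodForm_apply]
  simp only [map_zero, LinearMap.zero_apply, sub_zero]
  exact hv u ⟨(u, u'), hu, rfl⟩

lemma lag_right {V : Type*} [AddCommGroup V] [Module ℝ V]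
    (ω : V →ₗ[ℝ] V →ₗ[ℝ] ℝ) (L : Submodule ℝ (V × V))
    (hL : L = oOrtho (prodForm ω ω) L) (w : V)
    (hw : w ∈ oOrtho ω (Submodule.map (LinearMap.snd ℝ V V) L)) :
    (((0 : V), w) : V × V) ∈ L := by
  rw [hL, mem_oOrtho_iff]
  rintro ⟨u, u'⟩ hu
  rw [prodForm_apply]
  simp only [map_zero, LinearMap.zero_apply, zero_sub, neg_eq_zero]
  exact hw u' ⟨(u, u'), hu, rfl⟩

lemma map_oOrtho {V W : Type*} [AddCommGroup V] [Module ℝ V] [AddCommGroup W] [Module ℝ W]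
    (ω : V →ₗ[ℝ] V →ₗ[ℝ] ℝ) (ω' : W →ₗ[ℝ] W →ₗ[ℝ] ℝ)
    (S : V ≃ₗ[ℝ] W) (hS : ∀ v u : V, ω' (S v) (S u) = ω v u) (P : Submodule ℝ V) :
    Submodule.map (S : V →ₗ[ℝ] W) (oOrtho ω P) = oOrtho ω' (Submodule.map (S : V →ₗ[ℝ] W) P) := by
  ext w
  constructor
  · rintro ⟨v, hv, rfl⟩
    rintro u ⟨p, hp, rfl⟩
    simp only [LinearEquiv.coe_coe]
    rw [hS]
    exact hv p hp
  · intro hw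
    refine ⟨S.symm w, ?_, S.apply_symm_apply w⟩
    intro u hu
    have h := hw (S u) ⟨u, hu, rfl⟩
    rw [← hS (S.symm w) u, S.apply_symm_apply]
    exact h

/-- a linear symplectomorphism `S : V → V̂` is an equivalence between
linear canonical relations `L` and `L̂` iff (i) `S(A^ω) = Â^ω̂` and `S(B^ω) = B̂^ω̂`, and
(ii) `(S v₁, S (φ_L v₁)) ∈ L̂` for every `v₁ ∈ A₁`, where `φ_L : A₁ → B₁` is the induced
symplectomorphism of `L`. -/
theorem stmt15
    {V W : Type*} [AddCommGroup V] [Module ℝ V] [FiniteDimensional ℝ V]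
    [AddCommGroup W] [Module ℝ W] [FiniteDimensional ℝ W]
    (ω : V →ₗ[ℝ] V →ₗ[ℝ] ℝ) (hωalt : ω.IsAlt) (hωnd : ω.Nondegenerate)
    (ω' : W →ₗ[ℝ] W →ₗ[ℝ] ℝ) (hω'alt : ω'.IsAlt) (hω'nd : ω'.Nondegenerate)
    (L : Submodule ℝ (V × V)) (hL : L = oOrtho (prodForm ω ω) L)
    (L' : Submodule ℝ (W × W)) (hL' : L' = oOrtho (prodForm ω' ω') L')
    (A₁ B₁ : Submodule ℝ V)
    -- A = A^ω ⊕ A₁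
    (hA₁ : oOrtho ω (Submodule.map (LinearMap.fst ℝ V V) L) ⊓ A₁ = ⊥)
    (hA₂ : oOrtho ω (Submodule.map (LinearMap.fst ℝ V V) L) ⊔ A₁ =
      Submodule.map (LinearMap.fst ℝ V V) L)
    -- B = B^ω ⊕ B₁
    (hB₁ : oOrtho ω (Submodule.map (LinearMap.snd ℝ V V) L) ⊓ B₁ = ⊥)
    (hB₂ : oOrtho ω (Submodule.map (LinearMap.snd ℝ V V) L) ⊔ B₁ =
      Submodule.map (LinearMap.snd ℝ V V) L)
    -- the induced linear symplectomorphism φ_L : A₁ → B₁ of L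
    (φL : A₁ →ₗ[ℝ] V) (hφLran : ∀ v₁ : A₁, φL v₁ ∈ B₁)
    (hφL : ∀ (v₁ : A₁) (w₁ : V), w₁ ∈ B₁ → (((v₁ : V), w₁) ∈ L ↔ w₁ = φL v₁))
    -- a linear symplectomorphism S : V → V̂
    (S : V ≃ₗ[ℝ] W) (hS : ∀ v u : V, ω' (S v) (S u) = ω v u) :
    -- S is an equivalence between L and L̂ iff (i) and (ii) hold
    (∀ v w : V, (v, w) ∈ L ↔ (S v, S w) ∈ L') ↔
      ((Submodule.map (S : V →ₗ[ℝ] W) (oOrtho ω (Submodule.map (LinearMap.fst ℝ V V) L)) =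
          oOrtho ω' (Submodule.map (LinearMap.fst ℝ W W) L') ∧
        Submodule.map (S : V →ₗ[ℝ] W) (oOrtho ω (Submodule.map (LinearMap.snd ℝ V V) L)) =
          oOrtho ω' (Submodule.map (LinearMap.snd ℝ W W) L')) ∧
       (∀ v₁ : A₁, (S (v₁ : V), S (φL v₁)) ∈ L')) := by
  constructor
  · intro E
    have hfst : Submodule.map (LinearMap.fst ℝ W W) L' =
        Submodule.map (S : V →ₗ[ℝ] W) (Submodule.map (LinearMap.fst ℝ V V) L) := by
      ext w
      constructor
      · rintro ⟨⟨a, b⟩, hab, rfl⟩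
        have : (S.symm a, S.symm b) ∈ L := by
          rw [E, S.apply_symm_apply, S.apply_symm_apply]; exact hab
        exact ⟨S.symm a, ⟨(S.symm a, S.symm b), this, rfl⟩, S.apply_symm_apply a⟩
      · rintro ⟨v, ⟨⟨a, b⟩, hab, rfl⟩, rfl⟩
        exact ⟨(S a, S b), (E a b).1 hab, rfl⟩
    have hsnd : Submodule.map (LinearMap.snd ℝ W W) L' =
        Submodule.map (S : V →ₗ[ℝ] W) (Submodule.map (LinearMap.snd ℝ V V) L) := by
      ext w
      constructor
      · rintro ⟨⟨a, b⟩, hab, rfl⟩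
        have : (S.symm a, S.symm b) ∈ L := by
          rw [E, S.apply_symm_apply, S.apply_symm_apply]; exact hab
        exact ⟨S.symm b, ⟨(S.symm a, S.symm b), this, rfl⟩, S.apply_symm_apply b⟩
      · rintro ⟨v, ⟨⟨a, b⟩, hab, rfl⟩, rfl⟩
        exact ⟨(S a, S b), (E a b).1 hab, rfl⟩
    refine ⟨⟨?_, ?_⟩, ?_⟩
    · rw [hfst, ← map_oOrtho ω ω' S hS]
    · rw [hsnd, ← map_oOrtho ω ω' S hS]
    · intro v₁
      exact (E _ _).1 ((hφL v₁ (φL v₁) (hφLran v₁)).2 rfl)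
  · rintro ⟨⟨hA, hB⟩, hii⟩
    have fwd : ∀ v w : V, (v, w) ∈ L → (S v, S w) ∈ L' := by
      intro v w hvw
      have hvA : v ∈ oOrtho ω (Submodule.map (LinearMap.fst ℝ V V) L) ⊔ A₁ := by
        rw [hA₂]; exact ⟨(v, w), hvw, rfl⟩
      have hwB : w ∈ oOrtho ω (Submodule.map (LinearMap.snd ℝ V V) L) ⊔ B₁ := by
        rw [hB₂]; exact ⟨(v, w), hvw, rfl⟩
      obtain ⟨v₀, hv₀, v₁, hv₁, hv⟩ := Submodule.mem_sup.mp hvA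
      obtain ⟨w₀, hw₀, w₁, hw₁, hw⟩ := Submodule.mem_sup.mp hwB
      subst hv; subst hw
      have h10 : ((v₀, (0 : V)) : V × V) ∈ L := lag_left ω L hL v₀ hv₀
      have h01 : (((0 : V), w₀) : V × V) ∈ L := lag_right ω L hL w₀ hw₀
      have h11 : ((v₁, w₁) : V × V) ∈ L := by
        have := L.sub_mem (L.sub_mem hvw h10) h01
        have heq : ((v₀ + v₁, w₀ + w₁) : V × V) - (v₀, 0) - (0, w₀) = (v₁, w₁) := by
          simp [Prod.ext_iff]
        rwa [heq] at this
      have hφ : w₁ = φL ⟨v₁, hv₁⟩ := (hφL ⟨v₁, hv₁⟩ w₁ hw₁).1 h11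
      have hSv₀ : S v₀ ∈ oOrtho ω' (Submodule.map (LinearMap.fst ℝ W W) L') := by
        rw [← hA]; exact ⟨v₀, hv₀, rfl⟩
      have hSw₀ : S w₀ ∈ oOrtho ω' (Submodule.map (LinearMap.snd ℝ W W) L') := by
        rw [← hB]; exact ⟨w₀, hw₀, rfl⟩
      have h1 : ((S v₀, (0 : W)) : W × W) ∈ L' := lag_left ω' L' hL' _ hSv₀
      have h2 : (((0 : W), S w₀) : W × W) ∈ L' := lag_right ω' L' hL' _ hSw₀
      have h3 : ((S v₁, S w₁) : W × W) ∈ L' := by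
        rw [hφ]; exact hii ⟨v₁, hv₁⟩
      have heq : ((S (v₀ + v₁), S (w₀ + w₁)) : W × W) =
          (S v₀, 0) + (0, S w₀) + (S v₁, S w₁) := by
        simp [Prod.ext_iff, map_add]
      rw [heq]
      exact L'.add_mem (L'.add_mem h1 h2) h3
    intro v w
    refine ⟨fwd v w, ?_⟩
    intro h'
    rw [hL, mem_oOrtho_iff]
    rintro ⟨u, u'⟩ hu
    have hSu : (S u, S u') ∈ L' := fwd u u' hu
    have : prodForm ω' ω' (S v, S w) (S u, S u') = 0 := by
      rw [hL', mem_oOrtho_iff] at h'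
      exact h' _ hSu
    rw [prodForm_apply] at this ⊢
    simpa [hS] using this
end
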